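/- arXiv:2002.11590 — 2 statements merged into one kernel-verified Lean document; each statement's English description precedes it below -/
import Mathlib

section
/- Let T be the substochastic transition matrix of a random walk on nodes {1,…,N-1} of graph G absorbed at node N, with (I-T) invertible, and θ_j = [(I-T)^{-1}]_{1j}/ρ_j where ρ_j is the degree of j. Then for 1 < j < N, Σ_{ℓ ∈ N_j} θ_j = Σ_{ℓ ∈ N_j} θ_ℓ (with θ_N := 0), i.e., the net flow into j equals the net flow out of j; and for j = 1 the net out-flow equals 1. -/
theorem theta_flow_conservation {N : ℕ} (hN : 0 < N)
    (G : SimpleGraph (Fin (N + 1))) [DecidableRel G.Adj] (hconn : G.Connected)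
    (T : Matrix (Fin N) (Fin N) ℝ)
    (hT : ∀ j ℓ : Fin N, T j ℓ =
      if G.Adj j.castSucc ℓ.castSucc then 1 / (G.degree j.castSucc : ℝ) else 0)
    (hinv : IsUnit (1 - T)) (θ : Fin (N + 1) → ℝ)
    (hθlast : θ (Fin.last N) = 0)
    (hθ : ∀ j (h : j ≠ Fin.last N),
      θ j = (1 - T)⁻¹ ⟨0, hN⟩ (j.castPred h) / (G.degree j : ℝ)) :
    (∀ j : Fin (N + 1), j ≠ 0 → j ≠ Fin.last N →
      ∑ _ℓ ∈ G.neighborFinset j, θ j = ∑ ℓ ∈ G.neighborFinset j, θ ℓ) ∧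
    (∑ ℓ ∈ G.neighborFinset 0, (θ 0 - θ ℓ) = 1) := by
  set B := (1 - T)⁻¹ with hB
  set e0 : Fin N := ⟨0, hN⟩ with he0
  have hkey : B * (1 - T) = 1 :=
    Matrix.nonsing_inv_mul _ ((Matrix.isUnit_iff_isUnit_det _).mp hinv)
  -- positive degrees
  haveI : Nontrivial (Fin (N + 1)) := Fin.nontrivial_iff_two_le.mpr (by omega)
  have hdeg : ∀ v : Fin (N + 1), 0 < G.degree v := by
    intro v
    rw [G.degree_pos_iff_exists_adj]
    obtain ⟨w, hw⟩ := exists_ne v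
    obtain ⟨p⟩ := hconn.preconnected v w
    cases p with
    | nil => exact absurd rfl (Ne.symm hw)
    | cons h _ => exact ⟨_, h⟩
  have hdeg' : ∀ v : Fin (N + 1), (G.degree v : ℝ) ≠ 0 := fun v =>
    Nat.cast_ne_zero.mpr (hdeg v).ne'
  -- entrywise identity from hkey
  have hentry : ∀ k : Fin N,
      B e0 k - ∑ m, B e0 m * T m k = if e0 = k then 1 else 0 := by
    intro k
    have := congrFun (congrFun hkey e0) k
    rw [Matrix.mul_apply] at this
    simp only [Matrix.sub_apply, Matrix.one_apply, mul_sub, mul_ite, mul_one, mul_zero,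
      Finset.sum_sub_distrib, Finset.sum_ite_eq, Finset.mem_univ, if_true] at this
    rw [← this, Finset.sum_ite_eq' Finset.univ k (B e0)]
    simp
  -- neighbor sum = matrix sum
  have hsum : ∀ (j : Fin (N + 1)) (hj : j ≠ Fin.last N),
      ∑ ℓ ∈ G.neighborFinset j, θ ℓ = ∑ m, B e0 m * T m (j.castPred hj) := by
    intro j hj
    have h1 : ∑ ℓ ∈ G.neighborFinset j, θ ℓ
        = ∑ ℓ : Fin (N + 1), if G.Adj j ℓ then θ ℓ else 0 := by
      rw [show G.neighborFinset j = Finset.univ.filter (G.Adj j) from by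
        ext; simp [SimpleGraph.mem_neighborFinset], Finset.sum_filter]
    rw [h1, Fin.sum_univ_castSucc]
    have hlast : (if G.Adj j (Fin.last N) then θ (Fin.last N) else 0) = 0 := by
      simp [hθlast]
    rw [hlast, add_zero]
    apply Finset.sum_congr rfl
    intro m _
    rw [hT m (j.castPred hj)]
    rw [Fin.castSucc_castPred]
    by_cases hadj : G.Adj j m.castSucc
    · rw [if_pos hadj, if_pos (G.adj_symm hadj)]
      rw [hθ m.castSucc (Fin.castSucc_lt_last m).ne]
      rw [Fin.castPred_castSucc]
      field_simp
    · rw [if_neg hadj, if_neg (fun h => hadj (G.adj_symm h)), mul_zero]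
  -- constant sum = B entry
  have hconst : ∀ (j : Fin (N + 1)) (hj : j ≠ Fin.last N),
      ∑ _ℓ ∈ G.neighborFinset j, θ j = B e0 (j.castPred hj) := by
    intro j hj
    rw [Finset.sum_const, G.card_neighborFinset_eq_degree, hθ j hj, nsmul_eq_mul]
    rw [mul_comm]
    exact div_mul_cancel₀ _ (hdeg' j)
  constructor
  · intro j hj0 hjN
    rw [hconst j hjN, hsum j hjN]
    have hne : e0 ≠ j.castPred hjN := by
      intro h
      apply hj0
      have := congrArg Fin.castSucc h
      rw [Fin.castSucc_castPred] at this
      rw [← this]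
      rfl
    have := hentry (j.castPred hjN)
    rw [if_neg hne] at this
    linarith
  · have h0N : (0 : Fin (N + 1)) ≠ Fin.last N := by
      simp [Fin.ext_iff]; omega
    rw [Finset.sum_sub_distrib, hconst 0 h0N, hsum 0 h0N]
    have he : (0 : Fin (N + 1)).castPred h0N = e0 := by
      simp [Fin.ext_iff, he0]
    rw [he]
    have := hentry e0
    rw [if_pos rfl] at this
    linarith
end

section
/- In the complete graph K_N with reference node N and start node 1, by symmetry the expected edge-traversal quantities θ_j (for j = 2,…,N-1) are all equal, and the quality estimate takes the closed form q̂_1 = (2/N) d̂_{1,N} + (1/N) Σ_{j=2}^{N-1} (d̂_{1,j} + d̂_{j,N}), where d̂ is an antisymmetric matrix of edge observations. -/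
theorem complete_graph_closed_form (N : ℕ) (hN : 3 ≤ N)
    (T : Matrix (Fin (N - 1)) (Fin (N - 1)) ℝ)
    (hT : ∀ j ℓ, T j ℓ = if j ≠ ℓ then 1 / ((N : ℝ) - 1) else 0)
    (st : Fin (N - 1)) (hst : (st : ℕ) = 0)
    (θ : Fin (N - 1) → ℝ)
    (hθ : ∀ j, θ j = (1 - T)⁻¹ st j / ((N : ℝ) - 1))
    (ref v1 : Fin N) (href : (ref : ℕ) = N - 1) (hv1 : (v1 : ℕ) = 0)
    (dhat : Matrix (Fin N) (Fin N) ℝ) (hanti : ∀ i j, dhat i j = - dhat j i)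
    (qhat : Fin N → ℝ) (hqref : qhat ref = 0)
    (hq : ∀ i, i ≠ ref →
      qhat i = (∑ j ∈ Finset.univ.erase i, (qhat j + dhat i j)) / ((N : ℝ) - 1)) :
    (∀ j₁ j₂ : Fin (N - 1), j₁ ≠ st → j₂ ≠ st → θ j₁ = θ j₂) ∧
    qhat v1 = (2 / (N : ℝ)) * dhat v1 ref +
      (1 / (N : ℝ)) * ∑ j ∈ (Finset.univ.erase v1).erase ref, (dhat v1 j + dhat j ref) := by
  have hNpos : (0:ℝ) < N := by positivity
  have hNne : (N:ℝ) ≠ 0 := ne_of_gt hNpos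
  have hN1 : ((N:ℝ) - 1) ≠ 0 := by
    have : (3:ℝ) ≤ N := by exact_mod_cast hN
    linarith
  constructor
  · -- symmetry part
    intro j₁ j₂ h1 h2
    rw [hθ, hθ]
    congr 1
    set e : Fin (N-1) ≃ Fin (N-1) := Equiv.swap j₁ j₂ with he
    have hsub : (1 - T).submatrix e e = (1 - T) := by
      ext a b
      simp only [Matrix.submatrix_apply, Matrix.sub_apply, Matrix.one_apply, hT]
      have : e a = e b ↔ a = b := e.injective.eq_iff
      by_cases hab : a = b
      · simp [hab]
      · simp [hab, this.not.mpr hab]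
    have hinv : (1 - T)⁻¹.submatrix e e = (1 - T)⁻¹ := by
      conv_rhs => rw [← hsub]
      rw [Matrix.inv_submatrix_equiv]
    have hst' : e st = st := by
      rw [he, Equiv.swap_apply_of_ne_of_ne (Ne.symm h1) (Ne.symm h2)]
    calc (1 - T)⁻¹ st j₁ = ((1 - T)⁻¹.submatrix e e) st j₁ := by rw [hinv]
      _ = (1 - T)⁻¹ (e st) (e j₁) := rfl
      _ = (1 - T)⁻¹ st j₂ := by rw [hst', he, Equiv.swap_apply_left]
  · -- closed form part
    have hdiag : ∀ i, dhat i i = 0 := by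
      intro i; have := hanti i i; linarith
    have hv1ref : v1 ≠ ref := by
      intro h; rw [h] at hv1; rw [hv1] at href; omega
    set S : ℝ := ∑ j, qhat j with hS
    -- each equation: N * qhat i = S + ∑_j dhat i j
    have key : ∀ i, i ≠ ref → (N:ℝ) * qhat i = S + ∑ j, dhat i j := by
      intro i hi
      have h1 := hq i hi
      have h2 : ((N:ℝ) - 1) * qhat i = ∑ j ∈ Finset.univ.erase i, (qhat j + dhat i j) := by
        rw [h1]; field_simp
      rw [Finset.sum_add_distrib] at h2
      have h3 : ∑ j ∈ Finset.univ.erase i, qhat j = S - qhat i := by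
        rw [hS, ← Finset.sum_erase_add _ _ (Finset.mem_univ i)]; ring
      have h4 : ∑ j ∈ Finset.univ.erase i, dhat i j = ∑ j, dhat i j := by
        rw [← Finset.sum_erase_add _ _ (Finset.mem_univ i), hdiag]; ring
      rw [h3, h4] at h2
      linarith
    -- sum over i ≠ ref
    have hsum : (N:ℝ) * S = ((N:ℝ) - 1) * S +
        ∑ i ∈ Finset.univ.erase ref, ∑ j, dhat i j := by
      have := Finset.sum_congr rfl (fun i (hi : i ∈ Finset.univ.erase ref) =>
        key i (Finset.ne_of_mem_erase hi))
      have hSerase : ∑ i ∈ Finset.univ.erase ref, qhat i = S := by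
        rw [hS, ← Finset.sum_erase_add _ _ (Finset.mem_univ ref), hqref]; ring
      have hcard : (Finset.univ.erase ref).card = N - 1 := by
        rw [Finset.card_erase_of_mem (Finset.mem_univ ref), Finset.card_univ, Fintype.card_fin]
      calc (N:ℝ) * S = ∑ i ∈ Finset.univ.erase ref, (N:ℝ) * qhat i := by
            rw [← Finset.mul_sum, hSerase]
        _ = ∑ i ∈ Finset.univ.erase ref, (S + ∑ j, dhat i j) := this
        _ = ((N:ℝ) - 1) * S + ∑ i ∈ Finset.univ.erase ref, ∑ j, dhat i j := by
            rw [Finset.sum_add_distrib, Finset.sum_const, hcard, nsmul_eq_mul]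
            congr 2
            have : (1:ℕ) ≤ N := by omega
            push_cast [Nat.cast_sub this]
            ring
    -- double sum over erase ref vanishes
    have hdouble : ∑ i ∈ Finset.univ.erase ref, ∑ j ∈ Finset.univ.erase ref, dhat i j = 0 := by
      have h := Finset.sum_comm (s := Finset.univ.erase ref) (t := Finset.univ.erase ref)
        (f := fun i j => dhat i j)
      have h2 : ∑ i ∈ Finset.univ.erase ref, ∑ j ∈ Finset.univ.erase ref, dhat i j
          = - ∑ i ∈ Finset.univ.erase ref, ∑ j ∈ Finset.univ.erase ref, dhat i j := by
        conv_lhs => rw [h]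
        rw [← Finset.sum_neg_distrib]
        refine Finset.sum_congr rfl fun j _ => ?_
        rw [← Finset.sum_neg_distrib]
        exact Finset.sum_congr rfl fun i _ => hanti i j
      linarith
    have hsplit : ∀ i, ∑ j, dhat i j = dhat i ref + ∑ j ∈ Finset.univ.erase ref, dhat i j := by
      intro i
      rw [← Finset.sum_erase_add _ _ (Finset.mem_univ ref)]; ring
    have hSval : S = ∑ i ∈ Finset.univ.erase ref, dhat i ref := by
      have : ∑ i ∈ Finset.univ.erase ref, ∑ j, dhat i j
          = ∑ i ∈ Finset.univ.erase ref, dhat i ref := by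
        rw [Finset.sum_congr rfl (fun i _ => hsplit i), Finset.sum_add_distrib, hdouble]
        ring
      rw [this] at hsum
      linarith
    -- final computation
    have hkey1 := key v1 hv1ref
    have hq1 : (N:ℝ) * qhat v1 = (∑ i ∈ Finset.univ.erase ref, dhat i ref)
        + (dhat v1 ref + ∑ j ∈ Finset.univ.erase ref, dhat v1 j) := by
      rw [hkey1, hSval, hsplit v1]
    have hmemv1 : v1 ∈ Finset.univ.erase ref := Finset.mem_erase.mpr ⟨hv1ref, Finset.mem_univ v1⟩
    have h5 : ∑ i ∈ Finset.univ.erase ref, dhat i ref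
        = dhat v1 ref + ∑ i ∈ (Finset.univ.erase ref).erase v1, dhat i ref := by
      rw [← Finset.add_sum_erase _ _ hmemv1]
    have h6 : ∑ j ∈ Finset.univ.erase ref, dhat v1 j
        = dhat v1 v1 + ∑ j ∈ (Finset.univ.erase ref).erase v1, dhat v1 j := by
      rw [← Finset.add_sum_erase _ _ hmemv1]
    have hcomm : (Finset.univ.erase v1).erase ref = (Finset.univ.erase ref).erase v1 :=
      Finset.erase_right_comm
    have hq2 : (N:ℝ) * qhat v1 = 2 * dhat v1 ref +
        ∑ j ∈ (Finset.univ.erase v1).erase ref, (dhat v1 j + dhat j ref) := by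
      rw [hq1, h5, h6, hdiag, hcomm, Finset.sum_add_distrib]
      ring
    field_simp
    linarith
end
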